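/- arXiv:2109.10975 — 6 statements merged into one kernel-verified Lean document; each statement's English description precedes it below -/
import Mathlib

section
/- For y ∈ ℝ^m define the marginal (GLS) estimator β̃ = (XᵀV⁻¹X)⁻¹XᵀV⁻¹y and the BLUP of the random effects ũ = G Zᵀ V⁻¹ (y − X β̃). Then β̃ = (XᵀR⁻¹X)⁻¹ (XᵀR⁻¹y − XᵀR⁻¹Z ũ); that is, the estimator of the fixed effects obtained from the marginal log-likelihood coincides with the estimator obtained from the conditional (extended) log-likelihood with the random effect replaced by its BLUP (β̃_m = β̃_c). -/
open Matrix

private lemma mulVec_inj_of_rank {m p : ℕ} (X : Matrix (Fin m) (Fin p) ℝ)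
    (hX : X.rank = p) : Function.Injective X.mulVec := by
  have h := LinearMap.finrank_range_add_finrank_ker X.mulVecLin
  rw [Module.finrank_fintype_fun_eq_card, Fintype.card_fin] at h
  have hrank : Matrix.rank X = Module.finrank ℝ (LinearMap.range X.mulVecLin) := rfl
  rw [← hrank, hX] at h
  have hker : Module.finrank ℝ (LinearMap.ker X.mulVecLin) = 0 := by omega
  have : LinearMap.ker X.mulVecLin = ⊥ := Submodule.finrank_eq_zero.mp hker
  have hinj := LinearMap.ker_eq_bot.mp this
  intro a b hab
  exact hinj (by simpa [Matrix.mulVecLin_apply] using hab)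

private lemma posDef_conj {m p : ℕ} (X : Matrix (Fin m) (Fin p) ℝ)
    (M : Matrix (Fin m) (Fin m) ℝ) (hM : M.PosDef)
    (hinj : Function.Injective X.mulVec) : (Xᵀ * M * X).PosDef := by
  refine Matrix.PosDef.of_dotProduct_mulVec_pos ?_ ?_
  · have hMsym : Mᵀ = M := by
      have := hM.isHermitian
      simpa [Matrix.IsHermitian, Matrix.conjTranspose_eq_transpose_of_trivial] using this
    show (Xᵀ * M * X)ᴴ = _
    simp [Matrix.conjTranspose_eq_transpose_of_trivial, Matrix.transpose_mul, hMsym,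
      Matrix.mul_assoc]
  · intro x hx
    have hXx : X *ᵥ x ≠ 0 := by
      intro h
      apply hx
      apply hinj
      simpa using h
    have h := hM.dotProduct_mulVec_pos hXx
    show 0 < star x ⬝ᵥ (Xᵀ * M * X) *ᵥ x
    rw [show star x = x from rfl, Matrix.dotProduct_mulVec, Matrix.mul_assoc,
      ← Matrix.vecMul_vecMul, Matrix.vecMul_transpose, ← Matrix.dotProduct_mulVec,
      ← Matrix.mulVec_mulVec]
    simpa [Matrix.dotProduct_mulVec] using h

/-- The marginal (GLS) estimator `β̃ = (XᵀV⁻¹X)⁻¹XᵀV⁻¹y` coincides with the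
estimator obtained from the conditional (extended) log-likelihood with the
random effect replaced by its BLUP `ũ = G Zᵀ V⁻¹ (y − X β̃)`:
`β̃ = (XᵀR⁻¹X)⁻¹ (XᵀR⁻¹y − XᵀR⁻¹Z ũ)` (i.e. `β̃_m = β̃_c`). -/
theorem stmt4 {m p r : ℕ} (hm : 0 < m) (hp : 0 < p) (hr : 0 < r)
    (X : Matrix (Fin m) (Fin p) ℝ) (Z : Matrix (Fin m) (Fin r) ℝ)
    (R : Matrix (Fin m) (Fin m) ℝ) (G : Matrix (Fin r) (Fin r) ℝ)
    (hR : R.PosDef) (hG : G.PosDef)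
    (hX : X.rank = p)
    (V : Matrix (Fin m) (Fin m) ℝ) (hV : V = R + Z * G * Zᵀ)
    (y : Fin m → ℝ)
    (βt : Fin p → ℝ) (hβt : βt = ((Xᵀ * V⁻¹ * X)⁻¹ * Xᵀ * V⁻¹) *ᵥ y)
    (ut : Fin r → ℝ) (hut : ut = (G * Zᵀ * V⁻¹) *ᵥ (y - X *ᵥ βt)) :
    βt = (Xᵀ * R⁻¹ * X)⁻¹ *ᵥ ((Xᵀ * R⁻¹) *ᵥ y - (Xᵀ * R⁻¹ * Z) *ᵥ ut) := by
  have hinj := mulVec_inj_of_rank X hX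
  -- V is positive definite
  have hZGZ : (Z * G * Zᵀ).PosSemidef := by
    have := hG.posSemidef.mul_mul_conjTranspose_same Z
    simpa [Matrix.conjTranspose_eq_transpose_of_trivial, Matrix.mul_assoc] using this
  have hVpd : V.PosDef := hV ▸ hR.add_posSemidef hZGZ
  have hVdet : IsUnit V.det := isUnit_iff_ne_zero.mpr (ne_of_gt hVpd.det_pos)
  have hRdet : IsUnit R.det := isUnit_iff_ne_zero.mpr (ne_of_gt hR.det_pos)
  have hVVi : V * V⁻¹ = 1 := Matrix.mul_nonsing_inv V hVdet
  have hRiR : R⁻¹ * R = 1 := Matrix.nonsing_inv_mul R hRdet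
  -- XᵀV⁻¹X and XᵀR⁻¹X are invertible
  have hXVX : (Xᵀ * V⁻¹ * X).PosDef := posDef_conj X V⁻¹ hVpd.inv hinj
  have hXRX : (Xᵀ * R⁻¹ * X).PosDef := posDef_conj X R⁻¹ hR.inv hinj
  have hXVXdet : IsUnit (Xᵀ * V⁻¹ * X).det := isUnit_iff_ne_zero.mpr (ne_of_gt hXVX.det_pos)
  have hXRXdet : IsUnit (Xᵀ * R⁻¹ * X).det := isUnit_iff_ne_zero.mpr (ne_of_gt hXRX.det_pos)
  -- key matrix identity: V⁻¹ = R⁻¹ - R⁻¹(ZGZᵀ)V⁻¹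
  have hid : V⁻¹ = R⁻¹ - R⁻¹ * (Z * G * Zᵀ) * V⁻¹ := by
    have h1 : R⁻¹ * V * V⁻¹ = R⁻¹ := by rw [Matrix.mul_assoc, hVVi, Matrix.mul_one]
    calc V⁻¹ = R⁻¹ * R * V⁻¹ := by rw [hRiR, Matrix.one_mul]
    _ = R⁻¹ * V * V⁻¹ - R⁻¹ * (Z * G * Zᵀ) * V⁻¹ := by
        rw [hV]; noncomm_ring
    _ = R⁻¹ - R⁻¹ * (Z * G * Zᵀ) * V⁻¹ := by rw [h1]
  -- normal equation
  have key1 : (Xᵀ * V⁻¹ * X) *ᵥ βt = (Xᵀ * V⁻¹) *ᵥ y := by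
    rw [hβt, Matrix.mulVec_mulVec, ← Matrix.mul_assoc, ← Matrix.mul_assoc,
      Matrix.mul_nonsing_inv _ hXVXdet, Matrix.one_mul]
  set e : Fin m → ℝ := y - X *ᵥ βt with he
  have key2 : (Xᵀ * V⁻¹) *ᵥ e = 0 := by
    rw [he, Matrix.mulVec_sub, Matrix.mulVec_mulVec, Matrix.mul_assoc] at *
    rw [← key1]
    simp [Matrix.mul_assoc]
  have key4 : (Xᵀ * R⁻¹) *ᵥ y - (Xᵀ * R⁻¹ * Z) *ᵥ ut = (Xᵀ * R⁻¹ * X) *ᵥ βt := by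
    have hy : y = e + X *ᵥ βt := by rw [he]; abel
    have hZut : (Xᵀ * R⁻¹ * Z) *ᵥ ut = (Xᵀ * (R⁻¹ * (Z * G * Zᵀ) * V⁻¹)) *ᵥ e := by
      have hmm : Xᵀ * R⁻¹ * Z * (G * Zᵀ * V⁻¹) = Xᵀ * (R⁻¹ * (Z * G * Zᵀ) * V⁻¹) := by
        simp [Matrix.mul_assoc]
      rw [hut, Matrix.mulVec_mulVec, hmm]
    calc (Xᵀ * R⁻¹) *ᵥ y - (Xᵀ * R⁻¹ * Z) *ᵥ ut
        = (Xᵀ * R⁻¹) *ᵥ e + (Xᵀ * R⁻¹ * X) *ᵥ βt - (Xᵀ * (R⁻¹ * (Z * G * Zᵀ) * V⁻¹)) *ᵥ e := by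
          rw [hZut]
          conv_lhs => rw [hy]
          rw [Matrix.mulVec_add, Matrix.mulVec_mulVec, Matrix.mul_assoc]
    _ = (Xᵀ * (R⁻¹ - R⁻¹ * (Z * G * Zᵀ) * V⁻¹)) *ᵥ e + (Xᵀ * R⁻¹ * X) *ᵥ βt := by
          rw [Matrix.mul_sub, Matrix.sub_mulVec]
          abel
    _ = (Xᵀ * R⁻¹ * X) *ᵥ βt := by
          rw [← hid]
          rw [key2]
          simp
  rw [key4, Matrix.mulVec_mulVec, Matrix.nonsing_inv_mul _ hXRXdet, Matrix.one_mulVec]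
end

section
/- For y ∈ ℝ^m define β̃ = (XᵀV⁻¹X)⁻¹XᵀV⁻¹y and ũ = G Zᵀ V⁻¹ (y − X β̃). Then the pair (β̃, ũ) solves Henderson's mixed-model equations: XᵀR⁻¹X β̃ + XᵀR⁻¹Z ũ = XᵀR⁻¹y and ZᵀR⁻¹X β̃ + (ZᵀR⁻¹Z + G⁻¹) ũ = ZᵀR⁻¹y; equivalently, K (β̃, ũ) = CᵀR⁻¹y with C = [X Z] and K the Henderson block matrix. -/
open Matrix

/-- The pair `(β̃, ũ)` with `β̃ = (XᵀV⁻¹X)⁻¹XᵀV⁻¹y` and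
`ũ = G Zᵀ V⁻¹ (y − X β̃)` solves Henderson's mixed-model equations:
`XᵀR⁻¹X β̃ + XᵀR⁻¹Z ũ = XᵀR⁻¹y` and
`ZᵀR⁻¹X β̃ + (ZᵀR⁻¹Z + G⁻¹) ũ = ZᵀR⁻¹y`. -/
theorem stmt5 {m p r : ℕ} (hm : 0 < m) (hp : 0 < p) (hr : 0 < r)
    (X : Matrix (Fin m) (Fin p) ℝ) (Z : Matrix (Fin m) (Fin r) ℝ)
    (R : Matrix (Fin m) (Fin m) ℝ) (G : Matrix (Fin r) (Fin r) ℝ)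
    (hR : R.PosDef) (hG : G.PosDef)
    (hX : X.rank = p)
    (V : Matrix (Fin m) (Fin m) ℝ) (hV : V = R + Z * G * Zᵀ)
    (y : Fin m → ℝ)
    (βt : Fin p → ℝ) (hβt : βt = ((Xᵀ * V⁻¹ * X)⁻¹ * Xᵀ * V⁻¹) *ᵥ y)
    (ut : Fin r → ℝ) (hut : ut = (G * Zᵀ * V⁻¹) *ᵥ (y - X *ᵥ βt)) :
    (Xᵀ * R⁻¹ * X) *ᵥ βt + (Xᵀ * R⁻¹ * Z) *ᵥ ut = (Xᵀ * R⁻¹) *ᵥ y ∧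
      (Zᵀ * R⁻¹ * X) *ᵥ βt + (Zᵀ * R⁻¹ * Z + G⁻¹) *ᵥ ut = (Zᵀ * R⁻¹) *ᵥ y := by
  -- V is positive definite
  have hVpd : V.PosDef := by
    rw [hV]
    have : (Z * G * Zᵀ).PosSemidef := by
      have := hG.posSemidef.mul_mul_conjTranspose_same Z
      simpa using this
    exact hR.add_posSemidef this
  -- injectivity of X's mulVec
  have hXinj : Function.Injective X.mulVec := by
    rw [← Matrix.coe_mulVecLin]
    rw [← LinearMap.ker_eq_bot]
    have h1 := X.mulVecLin.finrank_range_add_finrank_ker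
    rw [show Module.finrank ℝ (Fin p → ℝ) = p by simp] at h1
    have hrank : Module.finrank ℝ (LinearMap.range X.mulVecLin) = p := hX
    rw [hrank] at h1
    have : Module.finrank ℝ (LinearMap.ker X.mulVecLin) = 0 := by omega
    exact Submodule.finrank_eq_zero.mp this
  -- XᵀV⁻¹X is positive definite
  have hVinv : (V⁻¹).PosDef := hVpd.inv
  have hSpd : (Xᵀ * V⁻¹ * X).PosDef := by
    refine Matrix.PosDef.of_dotProduct_mulVec_pos ?_ (fun x hx => ?_)
    · have := Matrix.isHermitian_conjTranspose_mul_mul X hVinv.isHermitian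
      simpa using this
    · have hXx : X *ᵥ x ≠ 0 := fun h => hx (hXinj (by simpa using h))
      have h0 := hVinv.dotProduct_mulVec_pos hXx
      rw [star_trivial] at h0
      show 0 < star x ⬝ᵥ (Xᵀ * V⁻¹ * X) *ᵥ x
      rw [star_trivial, ← Matrix.mulVec_mulVec, ← Matrix.mulVec_mulVec,
        Matrix.dotProduct_mulVec, Matrix.vecMul_transpose]
      exact h0
  -- invertibility facts
  have hR1 : R⁻¹ * R = 1 := Matrix.nonsing_inv_mul R (isUnit_iff_ne_zero.mpr hR.det_pos.ne')
  have hV1 : V * V⁻¹ = 1 := Matrix.mul_nonsing_inv V (isUnit_iff_ne_zero.mpr hVpd.det_pos.ne')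
  have hG1 : G⁻¹ * G = 1 := Matrix.nonsing_inv_mul G (isUnit_iff_ne_zero.mpr hG.det_pos.ne')
  have hS1 : (Xᵀ * V⁻¹ * X) * (Xᵀ * V⁻¹ * X)⁻¹ = 1 :=
    Matrix.mul_nonsing_inv _ (isUnit_iff_ne_zero.mpr hSpd.det_pos.ne')
  set B : Matrix (Fin p) (Fin m) ℝ := (Xᵀ * V⁻¹ * X)⁻¹ * Xᵀ * V⁻¹ with hB
  set U : Matrix (Fin r) (Fin m) ℝ := G * Zᵀ * V⁻¹ * (1 - X * B) with hU
  -- βt and ut as matrix-vector products of y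
  have hβt' : βt = B *ᵥ y := hβt
  have hut' : ut = U *ᵥ y := by
    rw [hut, hβt']
    simp only [hU, Matrix.mul_sub, Matrix.mul_one, Matrix.sub_mulVec,
      Matrix.mulVec_sub, Matrix.mulVec_mulVec]
  -- key: XᵀV⁻¹(1 - XB) = 0
  have key0 : Xᵀ * V⁻¹ * (1 - X * B) = 0 := by
    rw [Matrix.mul_sub, Matrix.mul_one, hB]
    rw [show Xᵀ * V⁻¹ * (X * ((Xᵀ * V⁻¹ * X)⁻¹ * Xᵀ * V⁻¹)) =
        (Xᵀ * V⁻¹ * X) * (Xᵀ * V⁻¹ * X)⁻¹ * (Xᵀ * V⁻¹) by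
      simp only [Matrix.mul_assoc]]
    rw [hS1, Matrix.one_mul, sub_self]
  -- key: R⁻¹ * (Z*G*Zᵀ) = R⁻¹*V - 1
  have key1 : R⁻¹ * (Z * G * Zᵀ) = R⁻¹ * V - 1 := by
    rw [hV, Matrix.mul_add, hR1]; abel
  -- first Henderson equation, matrix level
  have E1 : Xᵀ * R⁻¹ * X * B + Xᵀ * R⁻¹ * Z * U = Xᵀ * R⁻¹ := by
    have : Xᵀ * R⁻¹ * Z * U = Xᵀ * (R⁻¹ * (Z * G * Zᵀ)) * (V⁻¹ * (1 - X * B)) := by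
      rw [hU]; simp only [Matrix.mul_assoc]
    rw [this, key1, Matrix.mul_sub Xᵀ, Matrix.mul_one, Matrix.sub_mul]
    rw [show Xᵀ * (R⁻¹ * V) * (V⁻¹ * (1 - X * B)) =
        Xᵀ * R⁻¹ * (V * V⁻¹) * (1 - X * B) by simp only [Matrix.mul_assoc]]
    rw [hV1, Matrix.mul_one]
    rw [show Xᵀ * (V⁻¹ * (1 - X * B)) = Xᵀ * V⁻¹ * (1 - X * B) by
      simp only [Matrix.mul_assoc]]
    rw [key0, Matrix.mul_sub, Matrix.mul_one]
    rw [show Xᵀ * R⁻¹ * (X * B) = Xᵀ * R⁻¹ * X * B by simp only [Matrix.mul_assoc]]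
    abel
  -- second Henderson equation, matrix level
  have E2 : Zᵀ * R⁻¹ * X * B + (Zᵀ * R⁻¹ * Z + G⁻¹) * U = Zᵀ * R⁻¹ := by
    have h2 : (Zᵀ * R⁻¹ * Z + G⁻¹) * (G * Zᵀ) = Zᵀ * R⁻¹ * V := by
      rw [Matrix.add_mul]
      rw [show G⁻¹ * (G * Zᵀ) = (G⁻¹ * G) * Zᵀ by simp only [Matrix.mul_assoc]]
      rw [hG1, Matrix.one_mul, hV, Matrix.mul_add]
      rw [show Zᵀ * R⁻¹ * Z * (G * Zᵀ) = Zᵀ * R⁻¹ * (Z * G * Zᵀ) by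
        simp only [Matrix.mul_assoc]]
      rw [Matrix.mul_assoc Zᵀ R⁻¹ R, hR1, Matrix.mul_one]
      abel
    have : (Zᵀ * R⁻¹ * Z + G⁻¹) * U = (Zᵀ * R⁻¹ * Z + G⁻¹) * (G * Zᵀ) * (V⁻¹ * (1 - X * B)) := by
      rw [hU]; simp only [Matrix.mul_assoc]
    rw [this, h2]
    rw [show Zᵀ * R⁻¹ * V * (V⁻¹ * (1 - X * B)) =
        Zᵀ * R⁻¹ * (V * V⁻¹) * (1 - X * B) by simp only [Matrix.mul_assoc]]
    rw [hV1, Matrix.mul_one, Matrix.mul_sub, Matrix.mul_one]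
    rw [show Zᵀ * R⁻¹ * (X * B) = Zᵀ * R⁻¹ * X * B by simp only [Matrix.mul_assoc]]
    abel
  constructor
  · rw [hβt', hut', Matrix.mulVec_mulVec, Matrix.mulVec_mulVec, ← Matrix.add_mulVec, E1]
  · rw [hβt', hut', Matrix.mulVec_mulVec, Matrix.mulVec_mulVec, ← Matrix.add_mulVec, E2]
end

section
/- The Henderson block matrix K is invertible, and its inverse is the (p+r)×(p+r) block matrix with blocks (K⁻¹)₁₁ = (XᵀV⁻¹X)⁻¹, (K⁻¹)₁₂ = −(XᵀV⁻¹X)⁻¹XᵀV⁻¹ZG, (K⁻¹)₂₁ = −GZᵀV⁻¹X(XᵀV⁻¹X)⁻¹, and (K⁻¹)₂₂ = (ZᵀR⁻¹Z + G⁻¹)⁻¹ + GZᵀV⁻¹X(XᵀV⁻¹X)⁻¹XᵀV⁻¹ZG; i.e., the product of K with this block matrix (in either order) is the identity matrix. -/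
open Matrix

/-- The Henderson block matrix `K` is invertible, with inverse the block matrix
with blocks `(K⁻¹)₁₁ = (XᵀV⁻¹X)⁻¹`, `(K⁻¹)₁₂ = −(XᵀV⁻¹X)⁻¹XᵀV⁻¹ZG`,
`(K⁻¹)₂₁ = −GZᵀV⁻¹X(XᵀV⁻¹X)⁻¹` and
`(K⁻¹)₂₂ = (ZᵀR⁻¹Z + G⁻¹)⁻¹ + GZᵀV⁻¹X(XᵀV⁻¹X)⁻¹XᵀV⁻¹ZG`:
the product of `K` with this block matrix in either order is the identity. -/
theorem stmt6 {m p r : ℕ} (hm : 0 < m) (hp : 0 < p) (hr : 0 < r)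
    (X : Matrix (Fin m) (Fin p) ℝ) (Z : Matrix (Fin m) (Fin r) ℝ)
    (R : Matrix (Fin m) (Fin m) ℝ) (G : Matrix (Fin r) (Fin r) ℝ)
    (hR : R.PosDef) (hG : G.PosDef)
    (hX : X.rank = p)
    (V : Matrix (Fin m) (Fin m) ℝ) (hV : V = R + Z * G * Zᵀ)
    (K : Matrix (Fin p ⊕ Fin r) (Fin p ⊕ Fin r) ℝ)
    (hK : K = fromBlocks (Xᵀ * R⁻¹ * X) (Xᵀ * R⁻¹ * Z)
        (Zᵀ * R⁻¹ * X) (Zᵀ * R⁻¹ * Z + G⁻¹))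
    (Kinv : Matrix (Fin p ⊕ Fin r) (Fin p ⊕ Fin r) ℝ)
    (hKinv : Kinv = fromBlocks
        ((Xᵀ * V⁻¹ * X)⁻¹)
        (-((Xᵀ * V⁻¹ * X)⁻¹ * Xᵀ * V⁻¹ * Z * G))
        (-(G * Zᵀ * V⁻¹ * X * (Xᵀ * V⁻¹ * X)⁻¹))
        ((Zᵀ * R⁻¹ * Z + G⁻¹)⁻¹ + G * Zᵀ * V⁻¹ * X * (Xᵀ * V⁻¹ * X)⁻¹ * Xᵀ * V⁻¹ * Z * G)) :
    IsUnit K ∧ K * Kinv = 1 ∧ Kinv * K = 1 := by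
  -- basic invertibility facts
  have hRd : IsUnit R.det := hR.det_pos.ne'.isUnit
  have hGd : IsUnit G.det := hG.det_pos.ne'.isUnit
  have hSpd : (Zᵀ * R⁻¹ * Z + G⁻¹).PosDef := by
    have h := hR.inv.posSemidef.conjTranspose_mul_mul_same Z
    refine Matrix.PosDef.posSemidef_add ?_ hG.inv
    simpa [conjTranspose_eq_transpose_of_trivial] using h
  have hVpd : V.PosDef := by
    rw [hV]
    refine hR.add_posSemidef ?_
    have := hG.posSemidef.mul_mul_conjTranspose_same Z
    simpa [conjTranspose_eq_transpose_of_trivial, Matrix.mul_assoc] using this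
  have hSd : IsUnit (Zᵀ * R⁻¹ * Z + G⁻¹).det := hSpd.det_pos.ne'.isUnit
  have hVd : IsUnit V.det := hVpd.det_pos.ne'.isUnit
  -- X has trivial kernel
  have hinj : Function.Injective X.mulVecLin := by
    rw [← LinearMap.ker_eq_bot]
    have h := X.mulVecLin.finrank_range_add_finrank_ker
    rw [show Module.finrank ℝ (LinearMap.range X.mulVecLin) = p from hX] at h
    simp only [Module.finrank_fintype_fun_eq_card, Fintype.card_fin] at h
    have : Module.finrank ℝ (LinearMap.ker X.mulVecLin) = 0 := by omega
    exact Submodule.finrank_eq_zero.mp this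
  have hApd : (Xᵀ * V⁻¹ * X).PosDef := by
    refine Matrix.PosDef.of_dotProduct_mulVec_pos ?_ ?_
    · have h := hVpd.inv.isHermitian
      simp only [IsHermitian, conjTranspose_eq_transpose_of_trivial] at h ⊢
      simp only [transpose_mul, transpose_transpose, h, Matrix.mul_assoc]
    · intro x hx
      have hXx : X *ᵥ x ≠ 0 := by
        intro h
        apply hx
        have := hinj (a₁ := x) (a₂ := 0) (by simpa using h)
        simpa using this
      have h := hVpd.inv.dotProduct_mulVec_pos hXx
      convert h using 1
      simp only [star_trivial]
      rw [← Matrix.mulVec_mulVec, ← Matrix.mulVec_mulVec, Matrix.dotProduct_mulVec,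
        Matrix.vecMul_transpose]
  have hAd : IsUnit (Xᵀ * V⁻¹ * X).det := hApd.det_pos.ne'.isUnit
  -- key identities
  have key : V * (R⁻¹ * Z) = Z * G * (Zᵀ * R⁻¹ * Z + G⁻¹) := by
    rw [hV]
    simp only [Matrix.add_mul, Matrix.mul_add, Matrix.mul_assoc]
    rw [← Matrix.mul_assoc R R⁻¹ Z, Matrix.mul_nonsing_inv _ hRd, Matrix.one_mul,
      Matrix.mul_nonsing_inv _ hGd, Matrix.mul_one]
    exact add_comm _ _
  have h1 : V⁻¹ * (Z * G) = R⁻¹ * (Z * (Zᵀ * R⁻¹ * Z + G⁻¹)⁻¹) := by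
    have e1 : R⁻¹ * Z = V⁻¹ * (Z * G * (Zᵀ * R⁻¹ * Z + G⁻¹)) := by
      rw [← key, ← Matrix.mul_assoc, Matrix.nonsing_inv_mul _ hVd, Matrix.one_mul]
    calc V⁻¹ * (Z * G)
        = V⁻¹ * (Z * G * (Zᵀ * R⁻¹ * Z + G⁻¹)) * (Zᵀ * R⁻¹ * Z + G⁻¹)⁻¹ := by
          rw [Matrix.mul_assoc V⁻¹, Matrix.mul_assoc (Z * G), Matrix.mul_nonsing_inv _ hSd,
            Matrix.mul_one]
      _ = R⁻¹ * Z * (Zᵀ * R⁻¹ * Z + G⁻¹)⁻¹ := by rw [← e1]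
      _ = R⁻¹ * (Z * (Zᵀ * R⁻¹ * Z + G⁻¹)⁻¹) := by rw [Matrix.mul_assoc]
  -- symmetry facts
  have hGsym : Gᵀ = G := by
    exact (by simpa [conjTranspose_eq_transpose_of_trivial] using hG.isHermitian : G.IsSymm)
  have hRsym : Rᵀ = R := by
    exact (by simpa [conjTranspose_eq_transpose_of_trivial] using hR.isHermitian : R.IsSymm)
  have hVsym : Vᵀ = V := by
    rw [hV]
    simp [transpose_add, transpose_mul, hGsym, hRsym, Matrix.mul_assoc]
  have hSsym : (Zᵀ * R⁻¹ * Z + G⁻¹)ᵀ = Zᵀ * R⁻¹ * Z + G⁻¹ := by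
    simp [transpose_add, transpose_mul, transpose_nonsing_inv, hGsym, hRsym, Matrix.mul_assoc]
  have h2 : G * (Zᵀ * V⁻¹) = (Zᵀ * R⁻¹ * Z + G⁻¹)⁻¹ * (Zᵀ * R⁻¹) := by
    have h := congrArg Matrix.transpose h1
    simp only [transpose_mul, transpose_nonsing_inv, hGsym, hRsym, hVsym, hSsym,
      transpose_transpose] at h
    simpa only [Matrix.mul_assoc] using h
  have h2M : ∀ {k : ℕ} (M : Matrix (Fin m) (Fin k) ℝ),
      G * (Zᵀ * (V⁻¹ * M)) = (Zᵀ * R⁻¹ * Z + G⁻¹)⁻¹ * (Zᵀ * (R⁻¹ * M)) := by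
    intro k M
    calc G * (Zᵀ * (V⁻¹ * M)) = G * (Zᵀ * V⁻¹) * M := by simp only [Matrix.mul_assoc]
      _ = (Zᵀ * R⁻¹ * Z + G⁻¹)⁻¹ * (Zᵀ * R⁻¹) * M := by rw [h2]
      _ = (Zᵀ * R⁻¹ * Z + G⁻¹)⁻¹ * (Zᵀ * (R⁻¹ * M)) := by simp only [Matrix.mul_assoc]
  -- Woodbury identity
  have hW : V⁻¹ = R⁻¹ - R⁻¹ * (Z * ((Zᵀ * R⁻¹ * Z + G⁻¹)⁻¹ * (Zᵀ * R⁻¹))) := by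
    have h := Matrix.mul_nonsing_inv V hVd
    nth_rewrite 1 [hV] at h
    rw [Matrix.add_mul] at h
    have h' : R * V⁻¹ = 1 - Z * G * Zᵀ * V⁻¹ := eq_sub_of_add_eq h
    calc V⁻¹ = R⁻¹ * (R * V⁻¹) := by
          rw [← Matrix.mul_assoc, Matrix.nonsing_inv_mul _ hRd, Matrix.one_mul]
      _ = R⁻¹ * (1 - Z * G * Zᵀ * V⁻¹) := by rw [h']
      _ = R⁻¹ - R⁻¹ * (Z * (G * (Zᵀ * V⁻¹))) := by
          rw [Matrix.mul_sub, Matrix.mul_one]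
          simp only [Matrix.mul_assoc]
      _ = R⁻¹ - R⁻¹ * (Z * ((Zᵀ * R⁻¹ * Z + G⁻¹)⁻¹ * (Zᵀ * R⁻¹))) := by rw [h2]
  have hsplit : Xᵀ * (V⁻¹ * X)
      = Xᵀ * (R⁻¹ * X) - Xᵀ * (R⁻¹ * (Z * ((Zᵀ * R⁻¹ * Z + G⁻¹)⁻¹ * (Zᵀ * (R⁻¹ * X))))) := by
    rw [hW]
    simp only [Matrix.sub_mul, Matrix.mul_sub, Matrix.mul_assoc]
  have hAd' : IsUnit (Xᵀ * (V⁻¹ * X)).det := by rw [← Matrix.mul_assoc]; exact hAd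
  have hSd' : IsUnit (Zᵀ * (R⁻¹ * Z) + G⁻¹).det := by rw [← Matrix.mul_assoc]; exact hSd
  have hAA : Xᵀ * (V⁻¹ * X) * (Xᵀ * (V⁻¹ * X))⁻¹ = 1 := Matrix.mul_nonsing_inv _ hAd'
  have hSS : (Zᵀ * (R⁻¹ * Z) + G⁻¹) * (Zᵀ * (R⁻¹ * Z) + G⁻¹)⁻¹ = 1 :=
    Matrix.mul_nonsing_inv _ hSd'
  have hAAM : ∀ {k : ℕ} (M : Matrix (Fin p) (Fin k) ℝ),
      (Xᵀ * (V⁻¹ * X)) * ((Xᵀ * (V⁻¹ * X))⁻¹ * M) = M := by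
    intro k M
    rw [← Matrix.mul_assoc, hAA, Matrix.one_mul]
  have hSSM : ∀ {k : ℕ} (M : Matrix (Fin r) (Fin k) ℝ),
      (Zᵀ * (R⁻¹ * Z) + G⁻¹) * ((Zᵀ * (R⁻¹ * Z) + G⁻¹)⁻¹ * M) = M := by
    intro k M
    rw [← Matrix.mul_assoc, hSS, Matrix.one_mul]
  -- normalize remaining helper identities to right-associated form
  simp only [Matrix.mul_assoc] at h1 h2M hsplit
  -- block (1,1)
  have h11 : Xᵀ * R⁻¹ * X * (Xᵀ * V⁻¹ * X)⁻¹
      + Xᵀ * R⁻¹ * Z * -(G * Zᵀ * V⁻¹ * X * (Xᵀ * V⁻¹ * X)⁻¹) = 1 := by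
    have e := hAA
    nth_rewrite 1 [hsplit] at e
    simp only [Matrix.sub_mul, Matrix.mul_assoc] at e
    simp only [Matrix.mul_neg, Matrix.mul_assoc]
    rw [h2M, ← sub_eq_add_neg]
    exact e
  -- block (1,2)
  have h12 : Xᵀ * R⁻¹ * X * -((Xᵀ * V⁻¹ * X)⁻¹ * Xᵀ * V⁻¹ * Z * G)
      + Xᵀ * R⁻¹ * Z * ((Zᵀ * R⁻¹ * Z + G⁻¹)⁻¹
        + G * Zᵀ * V⁻¹ * X * (Xᵀ * V⁻¹ * X)⁻¹ * Xᵀ * V⁻¹ * Z * G) = 0 := by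
    simp only [Matrix.mul_neg, Matrix.mul_add, Matrix.mul_assoc]
    rw [h1, h2M]
    have e := hAAM (Xᵀ * (R⁻¹ * (Z * (Zᵀ * (R⁻¹ * Z) + G⁻¹)⁻¹)))
    nth_rewrite 1 [hsplit] at e
    simp only [Matrix.sub_mul, Matrix.mul_assoc] at e
    rw [sub_eq_iff_eq_add] at e
    rw [e, neg_add_cancel]
  -- block (2,1)
  have h21 : Zᵀ * R⁻¹ * X * (Xᵀ * V⁻¹ * X)⁻¹
      + (Zᵀ * R⁻¹ * Z + G⁻¹) * -(G * Zᵀ * V⁻¹ * X * (Xᵀ * V⁻¹ * X)⁻¹) = 0 := by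
    simp only [Matrix.mul_neg, Matrix.mul_assoc]
    rw [h2M, hSSM, add_neg_cancel]
  -- block (2,2)
  have h22 : Zᵀ * R⁻¹ * X * -((Xᵀ * V⁻¹ * X)⁻¹ * Xᵀ * V⁻¹ * Z * G)
      + (Zᵀ * R⁻¹ * Z + G⁻¹) * ((Zᵀ * R⁻¹ * Z + G⁻¹)⁻¹
        + G * Zᵀ * V⁻¹ * X * (Xᵀ * V⁻¹ * X)⁻¹ * Xᵀ * V⁻¹ * Z * G) = 1 := by
    simp only [Matrix.mul_neg, Matrix.mul_add, Matrix.mul_assoc]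
    rw [h1, h2M, hSSM, hSS]
    abel
  have main : K * Kinv = 1 := by
    rw [hK, hKinv, fromBlocks_multiply, h11, h12, h21, h22]
    exact fromBlocks_one
  have main' : Kinv * K = 1 := mul_eq_one_comm.mp main
  exact ⟨⟨⟨K, Kinv, main, main'⟩, rfl⟩, main, main'⟩
end

section
/- For every k ∈ ℝ^p and mv ∈ ℝ^r, writing c = (k, mv) ∈ ℝ^{p+r} and d = k − XᵀV⁻¹Z G mv, one has cᵀ K⁻¹ c = mvᵀ (G − G Zᵀ V⁻¹ Z G) mv + dᵀ (XᵀV⁻¹X)⁻¹ d. (This is the matrix-level decomposition mse₁(μ̂ᵢ) = cᵢᵀK⁻¹cᵢ = g₁ᵢ(θ) + g₂ᵢ(θ) of the first-order MSE of the mixed parameter μᵢ = kᵢᵀβ + mᵢᵀuᵢ.) -/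
open Matrix

/-- Matrix-level decomposition of the first-order MSE of the mixed parameter:
for `c = (k, mv)` and `d = k − XᵀV⁻¹Z G mv`,
`cᵀK⁻¹c = mvᵀ(G − GZᵀV⁻¹ZG)mv + dᵀ(XᵀV⁻¹X)⁻¹d`,
i.e. `mse₁(μ̂ᵢ) = cᵢᵀK⁻¹cᵢ = g₁ᵢ(θ) + g₂ᵢ(θ)`. -/
theorem stmt11 {m p r : ℕ} (hm : 0 < m) (hp : 0 < p) (hr : 0 < r)
    (X : Matrix (Fin m) (Fin p) ℝ) (Z : Matrix (Fin m) (Fin r) ℝ)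
    (R : Matrix (Fin m) (Fin m) ℝ) (G : Matrix (Fin r) (Fin r) ℝ)
    (hR : R.PosDef) (hG : G.PosDef)
    (hX : X.rank = p)
    (V : Matrix (Fin m) (Fin m) ℝ) (hV : V = R + Z * G * Zᵀ)
    (K : Matrix (Fin p ⊕ Fin r) (Fin p ⊕ Fin r) ℝ)
    (hK : K = fromBlocks (Xᵀ * R⁻¹ * X) (Xᵀ * R⁻¹ * Z)
        (Zᵀ * R⁻¹ * X) (Zᵀ * R⁻¹ * Z + G⁻¹))
    (k : Fin p → ℝ) (mv : Fin r → ℝ)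
    (c : Fin p ⊕ Fin r → ℝ) (hc : c = Sum.elim k mv)
    (d : Fin p → ℝ) (hd : d = k - (Xᵀ * V⁻¹ * Z * G) *ᵥ mv) :
    c ⬝ᵥ (K⁻¹ *ᵥ c)
      = mv ⬝ᵥ ((G - G * Zᵀ * V⁻¹ * Z * G) *ᵥ mv)
        + d ⬝ᵥ ((Xᵀ * V⁻¹ * X)⁻¹ *ᵥ d) := by
  -- basic positive definiteness facts
  have hVpd : V.PosDef := by
    rw [hV]
    refine hR.add_posSemidef ?_
    have := hG.posSemidef.mul_mul_conjTranspose_same Z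
    rwa [conjTranspose_eq_transpose_of_trivial] at this
  -- invertibility
  have hRdet : IsUnit R.det := (Matrix.isUnit_iff_isUnit_det R).mp hR.isUnit
  have hGdet : IsUnit G.det := (Matrix.isUnit_iff_isUnit_det G).mp hG.isUnit
  have hVdet : IsUnit V.det := (Matrix.isUnit_iff_isUnit_det V).mp hVpd.isUnit
  have hRR : R⁻¹ * R = 1 := Matrix.nonsing_inv_mul R hRdet
  have hRR' : R * R⁻¹ = 1 := Matrix.mul_nonsing_inv R hRdet
  have hGG : G⁻¹ * G = 1 := Matrix.nonsing_inv_mul G hGdet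
  have hVV : V * V⁻¹ = 1 := Matrix.mul_nonsing_inv V hVdet
  have hVV' : V⁻¹ * V = 1 := Matrix.nonsing_inv_mul V hVdet
  -- Xᵀ V⁻¹ X is PosDef
  have hA : (Xᵀ * V⁻¹ * X).PosDef := by
    have hVinv := hVpd.inv
    have hXinj : Function.Injective X.mulVecLin := by
      rw [← LinearMap.ker_eq_bot]
      have h1 := X.mulVecLin.finrank_range_add_finrank_ker
      rw [show Module.finrank ℝ (LinearMap.range X.mulVecLin) = p from hX] at h1
      simp only [Module.finrank_pi, Fintype.card_fin] at h1
      have : Module.finrank ℝ (LinearMap.ker X.mulVecLin) = 0 := by omega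
      exact Submodule.finrank_eq_zero.mp this
    rw [posDef_iff_dotProduct_mulVec]
    constructor
    · have h : (V⁻¹)ᵀ = V⁻¹ := by
        rw [← conjTranspose_eq_transpose_of_trivial]; exact hVinv.1.eq
      simp only [IsHermitian, conjTranspose_eq_transpose_of_trivial, transpose_mul,
        transpose_transpose, h]
      rw [Matrix.mul_assoc]
    · intro x hx
      have hXx : X *ᵥ x ≠ 0 := by
        intro h
        exact hx (hXinj (by simpa [mulVecLin_apply] using h))
      have := (posDef_iff_dotProduct_mulVec.mp hVinv).2 hXx
      simpa [star_trivial, ← Matrix.mulVec_mulVec, Matrix.dotProduct_mulVec,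
        Matrix.vecMul_transpose] using this
  have hAdet : IsUnit (Xᵀ * V⁻¹ * X).det := (Matrix.isUnit_iff_isUnit_det _).mp hA.isUnit
  set A := (Xᵀ * V⁻¹ * X)⁻¹ with hAdef
  have hA1 : (Xᵀ * V⁻¹ * X) * A = 1 := Matrix.mul_nonsing_inv _ hAdet
  -- trailing-parametric key identities (right-associated)
  have e1t : ∀ {q : Type} [Fintype q] (T : Matrix (Fin m) q ℝ),
      R⁻¹ * (Z * (G * (Zᵀ * (V⁻¹ * T)))) = R⁻¹ * T - V⁻¹ * T := by
    intro q _ T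
    have e1 : R⁻¹ * Z * G * Zᵀ * V⁻¹ = R⁻¹ - V⁻¹ := by
      have h : R⁻¹ * Z * G * Zᵀ = R⁻¹ * V - 1 := by
        rw [hV, Matrix.mul_add, hRR]
        simp only [Matrix.mul_assoc]
        abel
      calc R⁻¹ * Z * G * Zᵀ * V⁻¹ = (R⁻¹ * V - 1) * V⁻¹ := by rw [h]
        _ = R⁻¹ * (V * V⁻¹) - V⁻¹ := by
            rw [Matrix.sub_mul, Matrix.one_mul, Matrix.mul_assoc]
        _ = R⁻¹ - V⁻¹ := by rw [hVV, Matrix.mul_one]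
    calc R⁻¹ * (Z * (G * (Zᵀ * (V⁻¹ * T)))) = (R⁻¹ * Z * G * Zᵀ * V⁻¹) * T := by
          simp only [Matrix.mul_assoc]
      _ = (R⁻¹ - V⁻¹) * T := by rw [e1]
      _ = R⁻¹ * T - V⁻¹ * T := Matrix.sub_mul _ _ _
  have hGGt : ∀ {q : Type} [Fintype q] (T : Matrix (Fin r) q ℝ),
      G⁻¹ * (G * T) = T := by
    intro q _ T
    rw [← Matrix.mul_assoc, hGG, Matrix.one_mul]
  have hA1t : ∀ {q : Type} [Fintype q] (T : Matrix (Fin p) q ℝ),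
      Xᵀ * (V⁻¹ * (X * (A * T))) = T := by
    intro q _ T
    calc Xᵀ * (V⁻¹ * (X * (A * T))) = ((Xᵀ * V⁻¹ * X) * A) * T := by
          simp only [Matrix.mul_assoc]
      _ = T := by rw [hA1, Matrix.one_mul]
  -- the explicit inverse of K
  have hW2 : G * Zᵀ * V⁻¹ * X = (Xᵀ * V⁻¹ * Z * G)ᵀ := by
    have hGt : Gᵀ = G := by
      rw [← conjTranspose_eq_transpose_of_trivial]; exact hG.1.eq
    have hVit : (V⁻¹)ᵀ = V⁻¹ := by
      rw [← conjTranspose_eq_transpose_of_trivial]; exact hVpd.inv.1.eq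
    simp only [transpose_mul, transpose_transpose, hGt, hVit]
    simp only [Matrix.mul_assoc]
  have hKinv : K⁻¹ = fromBlocks A (-(A * (Xᵀ * V⁻¹ * Z * G)))
      (-((G * Zᵀ * V⁻¹ * X) * A))
      (G - G * Zᵀ * V⁻¹ * Z * G + (G * Zᵀ * V⁻¹ * X) * A * (Xᵀ * V⁻¹ * Z * G)) := by
    apply Matrix.inv_eq_right_inv
    rw [hK, fromBlocks_multiply, ← fromBlocks_one]
    have hA1' : Xᵀ * (V⁻¹ * (X * A)) = 1 := by
      rw [← Matrix.mul_assoc, ← Matrix.mul_assoc]; exact hA1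
    simp only [Matrix.mul_add, Matrix.mul_sub, Matrix.mul_neg, Matrix.add_mul,
      Matrix.sub_mul, Matrix.neg_mul, Matrix.mul_assoc, Matrix.mul_one, Matrix.one_mul,
      e1t, hGGt, hA1t, hA1', hGG]
    rw [fromBlocks_inj]
    refine ⟨by abel, by simp, by simp, by abel⟩
  subst hc hd
  rw [hKinv, hW2]
  simp only [fromBlocks_mulVec, sumElim_dotProduct_sumElim, Sum.elim_comp_inl,
    Sum.elim_comp_inr,
    Matrix.add_mulVec, Matrix.sub_mulVec, Matrix.neg_mulVec, dotProduct_add, dotProduct_sub,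
    dotProduct_neg, add_dotProduct, sub_dotProduct, neg_dotProduct, ← Matrix.mulVec_mulVec,
    Matrix.dotProduct_mulVec, Matrix.vecMul_transpose, Matrix.sub_vecMul, Matrix.vecMul_sub, Matrix.mulVec_sub, Matrix.sub_mulVec, sub_dotProduct, dotProduct_sub]
  ring
end

section
/- Let C = [X Z] be the m×(p+r) block matrix and assume C has full column rank p+r. Let G⁺ be the (p+r)×(p+r) block-diagonal matrix with upper-left block 0 (of size p×p) and lower-right block G⁻¹ (of size r×r). Then K = CᵀR⁻¹C + G⁺ is positive definite, and the effective degrees of freedom ρ = tr(C K⁻¹ Cᵀ R⁻¹) = tr(K⁻¹ CᵀR⁻¹C) satisfy p ≤ ρ ≤ p + r. -/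
open Matrix

lemma dp_cs {n : Type*} [Fintype n] (a b : n → ℝ) :
    (a ⬝ᵥ b) ^ 2 ≤ (a ⬝ᵥ a) * (b ⬝ᵥ b) := by
  simpa [dotProduct, pow_two] using
    Finset.sum_mul_sq_le_sq_mul_sq Finset.univ a b

lemma dp_self_nonneg {n : Type*} [Fintype n] (a : n → ℝ) : 0 ≤ a ⬝ᵥ a :=
  Finset.sum_nonneg fun _ _ => mul_self_nonneg _

/-- If `1 - DᵀD` is PSD then `1 - DDᵀ` is PSD (real matrices). -/
lemma one_sub_mul_transpose {n q : Type*} [Fintype n] [Fintype q] [DecidableEq n] [DecidableEq q]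
    (D : Matrix n q ℝ) (h : (1 - Dᵀ * D).PosSemidef) :
    (1 - D * Dᵀ).PosSemidef := by
  have hherm : (1 - D * Dᵀ).IsHermitian := by
    have : (D * Dᵀ).IsHermitian := by
      rw [Matrix.IsHermitian, conjTranspose_eq_transpose_of_trivial,
        transpose_mul, transpose_transpose]
    exact Matrix.isHermitian_one.sub this
  refine PosSemidef.of_dotProduct_mulVec_nonneg hherm fun x => ?_
  have hkey : ∀ v : q → ℝ, (D *ᵥ v) ⬝ᵥ (D *ᵥ v) ≤ v ⬝ᵥ v := by
    intro v
    have h1 := h.dotProduct_mulVec_nonneg v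
    simp only [star_trivial, sub_mulVec, one_mulVec, dotProduct_sub] at h1
    have h2 : v ⬝ᵥ ((Dᵀ * D) *ᵥ v) = (D *ᵥ v) ⬝ᵥ (D *ᵥ v) := by
      rw [← mulVec_mulVec, dotProduct_mulVec, ← mulVec_transpose, transpose_transpose]
    linarith [h2 ▸ h1]
  set y := Dᵀ *ᵥ x with hy
  have h1 : x ⬝ᵥ ((D * Dᵀ) *ᵥ x) = y ⬝ᵥ y := by
    rw [← mulVec_mulVec, dotProduct_mulVec, ← mulVec_transpose]
  have hyx : y ⬝ᵥ y ≤ x ⬝ᵥ x := by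
    rcases eq_or_lt_of_le (dp_self_nonneg y) with h0 | h0
    · rw [← h0]; exact dp_self_nonneg x
    · have hcs : (x ⬝ᵥ (D *ᵥ y)) ^ 2 ≤ (x ⬝ᵥ x) * ((D *ᵥ y) ⬝ᵥ (D *ᵥ y)) := dp_cs _ _
      have hDy : (D *ᵥ y) ⬝ᵥ (D *ᵥ y) ≤ y ⬝ᵥ y := hkey y
      have hxy : x ⬝ᵥ (D *ᵥ y) = y ⬝ᵥ y := by
        rw [dotProduct_mulVec, ← mulVec_transpose, ← hy]
      nlinarith [dp_self_nonneg x, dp_self_nonneg (D *ᵥ y)]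
  simp only [star_trivial, sub_mulVec, one_mulVec, dotProduct_sub, h1]
  linarith

lemma psd_trace_nonneg {n : Type*} [Fintype n] [DecidableEq n] (M : Matrix n n ℝ)
    (h : M.PosSemidef) : 0 ≤ M.trace := by
  rw [Matrix.trace]
  refine Finset.sum_nonneg fun i _ => ?_
  have h1 := h.dotProduct_mulVec_nonneg (Pi.single i 1)
  simpa [dotProduct, mulVec, Pi.single_apply, Finset.sum_ite_eq, Finset.sum_ite_eq',
    Matrix.diag] using h1

open scoped MatrixOrder in
lemma psd_sqrt_exists {n : Type*} [Fintype n] [DecidableEq n] (M : Matrix n n ℝ)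
    (h : M.PosSemidef) : ∃ W : Matrix n n ℝ, W * W = M ∧ W.IsHermitian :=
  ⟨CFC.sqrt M, CFC.sqrt_mul_sqrt_self M (Matrix.nonneg_iff_posSemidef.mpr h),
    (Matrix.nonneg_iff_posSemidef.mp (CFC.sqrt_nonneg M)).1⟩

/-- With `C = [X Z]` of full column rank `p + r` and
`G⁺ = diag(0, G⁻¹)`, the Henderson matrix `K = CᵀR⁻¹C + G⁺` is positive
definite, and the effective degrees of freedom
`ρ = tr(C K⁻¹ Cᵀ R⁻¹) = tr(K⁻¹ CᵀR⁻¹C)` satisfy `p ≤ ρ ≤ p + r`. -/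
theorem stmt12 {m p r : ℕ} (hm : 0 < m) (hp : 0 < p) (hr : 0 < r)
    (X : Matrix (Fin m) (Fin p) ℝ) (Z : Matrix (Fin m) (Fin r) ℝ)
    (R : Matrix (Fin m) (Fin m) ℝ) (G : Matrix (Fin r) (Fin r) ℝ)
    (hR : R.PosDef) (hG : G.PosDef)
    (C : Matrix (Fin m) (Fin p ⊕ Fin r) ℝ) (hC : C = fromCols X Z)
    (hCrank : C.rank = p + r)
    (Gplus : Matrix (Fin p ⊕ Fin r) (Fin p ⊕ Fin r) ℝ)
    (hGplus : Gplus = fromBlocks 0 0 0 G⁻¹)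
    (K : Matrix (Fin p ⊕ Fin r) (Fin p ⊕ Fin r) ℝ)
    (hK : K = Cᵀ * R⁻¹ * C + Gplus)
    (ρ : ℝ) (hρ : ρ = (C * K⁻¹ * Cᵀ * R⁻¹).trace) :
    K.PosDef ∧ ρ = (K⁻¹ * (Cᵀ * R⁻¹ * C)).trace ∧ (p : ℝ) ≤ ρ ∧ ρ ≤ p + r := by
  have hRinv : R⁻¹.PosDef := hR.inv
  -- injectivity of C from full column rank
  have hCinj : ∀ x : (Fin p ⊕ Fin r) → ℝ, C *ᵥ x = 0 → x = 0 := by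
    have hker : LinearMap.ker C.mulVecLin = ⊥ := by
      have h1 := LinearMap.finrank_range_add_finrank_ker C.mulVecLin
      have h2 : Module.finrank ℝ ((Fin p ⊕ Fin r) → ℝ) = p + r := by
        rw [Module.finrank_pi]; simp
      rw [h2] at h1
      have h3 : Module.finrank ℝ (LinearMap.range C.mulVecLin) = p + r := hCrank
      have h4 : Module.finrank ℝ (LinearMap.ker C.mulVecLin) = 0 := by omega
      exact Submodule.finrank_eq_zero.mp h4
    intro x hx
    have : x ∈ LinearMap.ker C.mulVecLin := hx
    rw [hker] at this
    simpa using this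
  -- A := CᵀR⁻¹C is positive definite
  have hA_psd : (Cᵀ * R⁻¹ * C).PosSemidef := by
    have := hRinv.posSemidef.conjTranspose_mul_mul_same C
    rwa [conjTranspose_eq_transpose_of_trivial] at this
  have hA_pd : (Cᵀ * R⁻¹ * C).PosDef := by
    refine PosDef.of_dotProduct_mulVec_pos hA_psd.1 fun ⦃x⦄ hx => ?_
    have hCx : C *ᵥ x ≠ 0 := fun h0 => hx (hCinj x h0)
    have hpos := hRinv.dotProduct_mulVec_pos hCx
    rw [star_trivial] at hpos ⊢
    have key : x ⬝ᵥ ((Cᵀ * R⁻¹ * C) *ᵥ x) = (C *ᵥ x) ⬝ᵥ (R⁻¹ *ᵥ (C *ᵥ x)) := by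
      conv_lhs => rw [Matrix.mul_assoc, ← mulVec_mulVec, dotProduct_mulVec,
        vecMul_transpose, ← mulVec_mulVec]
    rw [key]
    exact hpos
  -- Gplus = FᵀF is PSD, where F = [0 W], W = sqrt (G⁻¹)
  have hGinv_psd : (G⁻¹).PosSemidef := hG.inv.posSemidef
  obtain ⟨W, hWsq, hWherm⟩ := psd_sqrt_exists _ hGinv_psd
  have hW2 : W * W = G⁻¹ := hWsq
  have hWt : Wᵀ = W := by
    rw [← conjTranspose_eq_transpose_of_trivial]
    exact hWherm
  set F : Matrix (Fin r) (Fin p ⊕ Fin r) ℝ := fromCols 0 W with hFdef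
  have hFtF : Fᵀ * F = Gplus := by
    rw [hFdef, hGplus, transpose_fromCols, fromRows_mul_fromCols, hWt, hW2]
    simp
  have hGplus_psd : Gplus.PosSemidef := by
    rw [← hFtF]
    have := Matrix.posSemidef_conjTranspose_mul_self F
    rwa [conjTranspose_eq_transpose_of_trivial] at this
  -- K pos def
  have hK_pd : K.PosDef := hK ▸ hA_pd.add_posSemidef hGplus_psd
  have hKdet : IsUnit K.det := hK_pd.det_pos.ne'.isUnit
  have hKK : K * K⁻¹ = 1 := mul_nonsing_inv K hKdet
  have hKK' : K⁻¹ * K = 1 := nonsing_inv_mul K hKdet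
  -- S := sqrt of K⁻¹
  have hKinv_psd : (K⁻¹).PosSemidef := hK_pd.inv.posSemidef
  obtain ⟨S, hSsq, hSherm⟩ := psd_sqrt_exists _ hKinv_psd
  have hS2 : S * S = K⁻¹ := hSsq
  have hSt : Sᵀ = S := by
    rw [← conjTranspose_eq_transpose_of_trivial]
    exact hSherm
  have h1 : S * K⁻¹ = K⁻¹ * S := by rw [← hS2]; exact (mul_assoc S S S).symm
  have e1 : K * (S * K⁻¹) * K = K * S := by
    rw [mul_assoc K (S * K⁻¹) K, mul_assoc S K⁻¹ K, hKK', mul_one]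
  have e2 : K * (K⁻¹ * S) * K = S * K := by
    rw [← mul_assoc K K⁻¹ S, hKK, one_mul]
  have hcomm : K * S = S * K := by rw [← e1, h1, e2]
  have hSKS : S * K * S = 1 := by
    rw [← hcomm, mul_assoc, hS2, hKK]
  set D : Matrix (Fin r) (Fin p ⊕ Fin r) ℝ := F * S with hDdef
  have hDt : Dᵀ = S * Fᵀ := by rw [hDdef, transpose_mul, hSt]
  have hDtD : Dᵀ * D = S * Gplus * S := by
    rw [hDt, hDdef, ← Matrix.mul_assoc, Matrix.mul_assoc S Fᵀ F, hFtF]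
  have hAKG : Cᵀ * R⁻¹ * C = K - Gplus := by rw [hK, add_sub_cancel_right]
  have hone : (1 : Matrix (Fin p ⊕ Fin r) (Fin p ⊕ Fin r) ℝ) - Dᵀ * D
      = S * (Cᵀ * R⁻¹ * C) * S := by
    rw [hAKG, Matrix.mul_sub, Matrix.sub_mul, hSKS, ← hDtD]
  have hpsd1 : ((1 : Matrix (Fin p ⊕ Fin r) (Fin p ⊕ Fin r) ℝ) - Dᵀ * D).PosSemidef := by
    rw [hone]
    have := hA_psd.mul_mul_conjTranspose_same S
    rwa [conjTranspose_eq_transpose_of_trivial, hSt] at this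
  have hpsd2 := one_sub_mul_transpose D hpsd1
  have hDDt : D * Dᵀ = F * K⁻¹ * Fᵀ := by
    rw [hDt, hDdef, Matrix.mul_assoc F S (S * Fᵀ), ← Matrix.mul_assoc S S Fᵀ, hS2, ← Matrix.mul_assoc]
  -- t := trace (K⁻¹ * Gplus)
  have htr : (K⁻¹ * Gplus).trace = (D * Dᵀ).trace := by
    rw [hDDt, ← hFtF, ← Matrix.mul_assoc, trace_mul_comm, ← Matrix.mul_assoc]
  have htr_nonneg : 0 ≤ (D * Dᵀ).trace := by
    refine psd_trace_nonneg _ ?_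
    refine PosSemidef.of_dotProduct_mulVec_nonneg ?_ ?_
    · have : (D * Dᵀ).IsHermitian := by
        rw [Matrix.IsHermitian, conjTranspose_eq_transpose_of_trivial,
          transpose_mul, transpose_transpose]
      exact this
    · intro x
      have h1 := hpsd2.dotProduct_mulVec_nonneg x
      have h2 : x ⬝ᵥ ((D * Dᵀ) *ᵥ x) = (Dᵀ *ᵥ x) ⬝ᵥ (Dᵀ *ᵥ x) := by
        rw [← mulVec_mulVec, dotProduct_mulVec, ← mulVec_transpose]
      simpa [star_trivial, h2] using dp_self_nonneg (Dᵀ *ᵥ x)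
  have htr_le : (D * Dᵀ).trace ≤ (r : ℝ) := by
    have h1 := psd_trace_nonneg _ hpsd2
    rw [trace_sub, trace_one] at h1
    simpa using h1
  -- trace identities
  have hρ2 : ρ = (K⁻¹ * (Cᵀ * R⁻¹ * C)).trace := by
    rw [hρ, show C * K⁻¹ * Cᵀ * R⁻¹ = C * (K⁻¹ * (Cᵀ * R⁻¹)) from by
      simp only [Matrix.mul_assoc], trace_mul_comm, show K⁻¹ * (Cᵀ * R⁻¹) * C
      = K⁻¹ * (Cᵀ * R⁻¹ * C) from by simp only [Matrix.mul_assoc]]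
  have hρ3 : ρ = ((p : ℝ) + r) - (K⁻¹ * Gplus).trace := by
    rw [hρ2, hAKG, mul_sub, hKK', trace_sub, trace_one]
    simp
  refine ⟨hK_pd, hρ2, ?_, ?_⟩
  · rw [hρ3, htr]; linarith
  · rw [hρ3, htr]; linarith
end

section
/- Let W be the (r+m)×(r+m) block-diagonal matrix diag(G, R), T = [Z I_m] the m×(r+m) block matrix, A = (XᵀV⁻¹X)⁻¹XᵀV⁻¹, P = [I_r 0] the r×(r+m) block matrix, and let M be the (p+r)×(r+m) matrix whose top p×(r+m) block is A·T and whose bottom r×(r+m) block is G Zᵀ V⁻¹ (I_m − X A)·T − P. Then M W Mᵀ = K⁻¹. (Since M sends (u,e) to (β̃ − β, ũ − u) and W = Cov(u,e), this is the identity MSE{μ̃ᵢ(θ)} = cᵢᵀ K⁻¹ cᵢ for the variance of the BLUP-based predictor of the mixed parameter.) -/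
open Matrix

lemma posDef_transpose_mul_mul {m p : ℕ} (X : Matrix (Fin m) (Fin p) ℝ)
    (N : Matrix (Fin m) (Fin m) ℝ) (hN : N.PosDef)
    (hinj : Function.Injective X.mulVec) : (Xᵀ * N * X).PosDef := by
  have hNt : Nᵀ = N := by
    rw [← conjTranspose_eq_transpose_of_trivial]; exact hN.1
  refine PosDef.of_dotProduct_mulVec_pos ?_ ?_
  · show (Xᵀ * N * X)ᴴ = Xᵀ * N * X
    rw [conjTranspose_eq_transpose_of_trivial, transpose_mul, transpose_mul,
      transpose_transpose, hNt, Matrix.mul_assoc]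
  · intro x hx
    have hx' : X *ᵥ x ≠ 0 := by
      intro h
      exact hx (hinj (by simpa using h))
    have h2 := hN.dotProduct_mulVec_pos hx'
    have key : x ⬝ᵥ ((Xᵀ * N * X) *ᵥ x) = (X *ᵥ x) ⬝ᵥ (N *ᵥ (X *ᵥ x)) := by
      rw [← Matrix.mulVec_mulVec, ← Matrix.mulVec_mulVec, Matrix.dotProduct_mulVec x,
        Matrix.vecMul_transpose]
    simpa [key] using h2

set_option maxHeartbeats 4000000 in
/-- With `W = diag(G, R)`, `T = [Z I]`, `A = (XᵀV⁻¹X)⁻¹XᵀV⁻¹`, `P = [I 0]`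
and `M` the matrix stacking `A·T` on top of `GZᵀV⁻¹(I − XA)·T − P`, one has
`M W Mᵀ = K⁻¹`: the matrix identity `MSE{μ̃ᵢ(θ)} = cᵢᵀK⁻¹cᵢ` for the variance
of the BLUP-based predictor of the mixed parameter. -/
theorem stmt13 {m p r : ℕ} (hm : 0 < m) (hp : 0 < p) (hr : 0 < r)
    (X : Matrix (Fin m) (Fin p) ℝ) (Z : Matrix (Fin m) (Fin r) ℝ)
    (R : Matrix (Fin m) (Fin m) ℝ) (G : Matrix (Fin r) (Fin r) ℝ)
    (hR : R.PosDef) (hG : G.PosDef)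
    (hX : X.rank = p)
    (V : Matrix (Fin m) (Fin m) ℝ) (hV : V = R + Z * G * Zᵀ)
    (K : Matrix (Fin p ⊕ Fin r) (Fin p ⊕ Fin r) ℝ)
    (hK : K = fromBlocks (Xᵀ * R⁻¹ * X) (Xᵀ * R⁻¹ * Z)
        (Zᵀ * R⁻¹ * X) (Zᵀ * R⁻¹ * Z + G⁻¹))
    (W : Matrix (Fin r ⊕ Fin m) (Fin r ⊕ Fin m) ℝ)
    (hW : W = fromBlocks G 0 0 R)
    (T : Matrix (Fin m) (Fin r ⊕ Fin m) ℝ) (hT : T = fromCols Z 1)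
    (A : Matrix (Fin p) (Fin m) ℝ) (hA : A = (Xᵀ * V⁻¹ * X)⁻¹ * Xᵀ * V⁻¹)
    (P : Matrix (Fin r) (Fin r ⊕ Fin m) ℝ) (hP : P = fromCols 1 0)
    (M : Matrix (Fin p ⊕ Fin r) (Fin r ⊕ Fin m) ℝ)
    (hM : M = fromRows (A * T) (G * Zᵀ * V⁻¹ * (1 - X * A) * T - P)) :
    M * W * Mᵀ = K⁻¹ := by
  -- injectivity of `X.mulVec` from the rank hypothesis
  have h1 : Module.finrank ℝ (LinearMap.range X.mulVecLin) = p := hX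
  have h2 := LinearMap.finrank_range_add_finrank_ker X.mulVecLin
  rw [h1, Module.finrank_fintype_fun_eq_card, Fintype.card_fin] at h2
  have h3 : Module.finrank ℝ (LinearMap.ker X.mulVecLin) = 0 := by omega
  have h4 : LinearMap.ker X.mulVecLin = ⊥ := Submodule.finrank_eq_zero.mp h3
  have hinj : Function.Injective X.mulVec := by
    have h5 := LinearMap.ker_eq_bot.mp h4
    intro a b hab
    exact h5 (by simpa [Matrix.mulVecLin_apply] using hab)
  -- positive definiteness facts
  have hVpd : V.PosDef := by
    rw [hV]
    refine hR.add_posSemidef ?_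
    have := hG.posSemidef.mul_mul_conjTranspose_same Z
    rwa [conjTranspose_eq_transpose_of_trivial] at this
  have hVdet : IsUnit V.det := (Matrix.isUnit_iff_isUnit_det V).mp hVpd.isUnit
  have hGdet : IsUnit G.det := (Matrix.isUnit_iff_isUnit_det G).mp hG.isUnit
  have hRdet : IsUnit R.det := (Matrix.isUnit_iff_isUnit_det R).mp hR.isUnit
  have hSpd : (Xᵀ * V⁻¹ * X).PosDef := posDef_transpose_mul_mul X V⁻¹ hVpd.inv hinj
  have hSdet : IsUnit (Xᵀ * V⁻¹ * X).det :=
    (Matrix.isUnit_iff_isUnit_det _).mp hSpd.isUnit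
  have hSdet' : IsUnit (Xᵀ * (V⁻¹ * X)).det := by
    rwa [← Matrix.mul_assoc]
  -- symmetry facts
  have hVt : Vᵀ = V := by
    rw [← conjTranspose_eq_transpose_of_trivial]; exact hVpd.1
  have hGt : Gᵀ = G := by
    rw [← conjTranspose_eq_transpose_of_trivial]; exact hG.1
  have hVit : V⁻¹ᵀ = V⁻¹ := by rw [Matrix.transpose_nonsing_inv, hVt]
  -- cancellation rules
  have cV1 : ∀ (k : Type) [Fintype k] (t : Matrix (Fin m) k ℝ), V * (V⁻¹ * t) = t :=
    fun k _ t => Matrix.mul_nonsing_inv_cancel_left V t hVdet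
  have cV2 : ∀ (k : Type) [Fintype k] (t : Matrix (Fin m) k ℝ), V⁻¹ * (V * t) = t :=
    fun k _ t => Matrix.nonsing_inv_mul_cancel_left V t hVdet
  have hVV : V * V⁻¹ = 1 := Matrix.mul_nonsing_inv V hVdet
  have hViV : V⁻¹ * V = 1 := Matrix.nonsing_inv_mul V hVdet
  have cG1 : ∀ (k : Type) [Fintype k] (t : Matrix (Fin r) k ℝ), G * (G⁻¹ * t) = t :=
    fun k _ t => Matrix.mul_nonsing_inv_cancel_left G t hGdet
  have cG2 : ∀ (k : Type) [Fintype k] (t : Matrix (Fin r) k ℝ), G⁻¹ * (G * t) = t :=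
    fun k _ t => Matrix.nonsing_inv_mul_cancel_left G t hGdet
  have hGG : G * G⁻¹ = 1 := Matrix.mul_nonsing_inv G hGdet
  have hGiG : G⁻¹ * G = 1 := Matrix.nonsing_inv_mul G hGdet
  have cR1 : ∀ (k : Type) [Fintype k] (t : Matrix (Fin m) k ℝ), R * (R⁻¹ * t) = t :=
    fun k _ t => Matrix.mul_nonsing_inv_cancel_left R t hRdet
  have cR2 : ∀ (k : Type) [Fintype k] (t : Matrix (Fin m) k ℝ), R⁻¹ * (R * t) = t :=
    fun k _ t => Matrix.nonsing_inv_mul_cancel_left R t hRdet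
  have hRR : R * R⁻¹ = 1 := Matrix.mul_nonsing_inv R hRdet
  have hRiR : R⁻¹ * R = 1 := Matrix.nonsing_inv_mul R hRdet
  have cS1 : ∀ (k : Type) [Fintype k] (t : Matrix (Fin p) k ℝ),
      (Xᵀ * (V⁻¹ * X))⁻¹ * (Xᵀ * (V⁻¹ * (X * t))) = t := by
    intro k _ t
    have h : Xᵀ * (V⁻¹ * (X * t)) = (Xᵀ * (V⁻¹ * X)) * t := by
      simp only [Matrix.mul_assoc]
    rw [h, Matrix.nonsing_inv_mul_cancel_left _ t hSdet']
  have cS10 : (Xᵀ * (V⁻¹ * X))⁻¹ * (Xᵀ * (V⁻¹ * X)) = 1 :=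
    Matrix.nonsing_inv_mul _ hSdet'
  have cS2 : ∀ (k : Type) [Fintype k] (t : Matrix (Fin p) k ℝ),
      Xᵀ * (V⁻¹ * (X * ((Xᵀ * (V⁻¹ * X))⁻¹ * t))) = t := by
    intro k _ t
    have h : Xᵀ * (V⁻¹ * (X * ((Xᵀ * (V⁻¹ * X))⁻¹ * t)))
        = (Xᵀ * (V⁻¹ * X)) * ((Xᵀ * (V⁻¹ * X))⁻¹ * t) := by
      simp only [Matrix.mul_assoc]
    rw [h, Matrix.mul_nonsing_inv_cancel_left _ t hSdet']
  have cS20 : Xᵀ * (V⁻¹ * (X * (Xᵀ * (V⁻¹ * X))⁻¹)) = 1 := by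
    have h : Xᵀ * (V⁻¹ * (X * (Xᵀ * (V⁻¹ * X))⁻¹))
        = (Xᵀ * (V⁻¹ * X)) * (Xᵀ * (V⁻¹ * X))⁻¹ := by
      simp only [Matrix.mul_assoc]
    rw [h, Matrix.mul_nonsing_inv _ hSdet']
  -- the `Z G Zᵀ = V - R` rules
  have hZGZ : ∀ (k : Type) [Fintype k] (t : Matrix (Fin m) k ℝ),
      Z * (G * (Zᵀ * t)) = V * t - R * t := by
    intro k _ t
    have h : Z * (G * (Zᵀ * t)) = (Z * G * Zᵀ) * t := by
      simp only [Matrix.mul_assoc]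
    rw [h, hV, Matrix.add_mul]
    exact (add_sub_cancel_left _ _).symm
  have hZGZ0 : Z * (G * Zᵀ) = V - R := by
    rw [hV, ← Matrix.mul_assoc]
    exact (add_sub_cancel_left _ _).symm
  -- the `T`, `W`, `P` structural rules
  have hTW : T * W = fromCols (Z * G) R := by
    rw [hT, hW, fromCols_mul_fromBlocks]
    simp
  have hPW : P * W = fromCols G 0 := by
    rw [hP, hW, fromCols_mul_fromBlocks]
    simp
  have hTt : Tᵀ = fromRows Zᵀ 1 := by rw [hT, transpose_fromCols, transpose_one]
  have hPt : Pᵀ = fromRows 1 0 := by rw [hP, transpose_fromCols, transpose_one, transpose_zero]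
  have cTWT : ∀ (k : Type) [Fintype k] (t : Matrix (Fin m) k ℝ),
      T * (W * (Tᵀ * t)) = V * t := by
    intro k _ t
    have h : T * (W * (Tᵀ * t)) = ((T * W) * Tᵀ) * t := by
      simp only [Matrix.mul_assoc]
    rw [h, hTW, hTt, fromCols_mul_fromRows, Matrix.mul_one, hV]
    rw [Matrix.add_mul, Matrix.add_mul, add_comm, Matrix.mul_assoc, Matrix.mul_assoc]
  have cTWT0 : T * (W * Tᵀ) = V := by
    rw [← Matrix.mul_assoc, hTW, hTt, fromCols_mul_fromRows, Matrix.mul_one, hV, add_comm]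
  have cTWP0 : T * (W * Pᵀ) = Z * G := by
    rw [← Matrix.mul_assoc, hTW, hPt, fromCols_mul_fromRows, Matrix.mul_one, Matrix.mul_zero,
      add_zero]
  have cPWT : ∀ (k : Type) [Fintype k] (t : Matrix (Fin m) k ℝ),
      P * (W * (Tᵀ * t)) = G * (Zᵀ * t) := by
    intro k _ t
    have h : P * (W * (Tᵀ * t)) = ((P * W) * Tᵀ) * t := by
      simp only [Matrix.mul_assoc]
    rw [h, hPW, hTt, fromCols_mul_fromRows, Matrix.zero_mul, add_zero, Matrix.mul_assoc]
  have cPWT0 : P * (W * Tᵀ) = G * Zᵀ := by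
    rw [← Matrix.mul_assoc, hPW, hTt, fromCols_mul_fromRows, Matrix.zero_mul, add_zero]
  have cPWP0 : P * (W * Pᵀ) = G := by
    rw [← Matrix.mul_assoc, hPW, hPt, fromCols_mul_fromRows, Matrix.mul_one, Matrix.zero_mul,
      add_zero]
  -- main computation : K * (M * W * Mᵀ) = 1
  have key : K * (M * W * Mᵀ) = 1 := by
    rw [hM, hK]
    rw [transpose_fromRows, fromRows_mul, fromRows_mul_fromCols, fromBlocks_multiply,
      ← fromBlocks_one]
    simp only [hA, transpose_mul, transpose_sub, transpose_one, transpose_zero,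
      transpose_transpose, Matrix.transpose_nonsing_inv, hVt, hGt, hVit,
      Matrix.mul_assoc, Matrix.mul_sub, Matrix.sub_mul, Matrix.mul_add, Matrix.add_mul,
      Matrix.mul_one, Matrix.one_mul, Matrix.mul_zero, Matrix.zero_mul,
      sub_zero, zero_sub, add_zero, zero_add,
      cTWT, cTWT0, cTWP0, cPWT, cPWT0, cPWP0,
      cV1, cV2, cG1, cG2, cR1, cR2, cS1, cS10, cS2, cS20, hZGZ, hZGZ0,
      hVV, hViV, hGG, hGiG, hRR, hRiR]
    rw [fromBlocks_inj]
    refine ⟨by abel, by abel, by abel, by abel⟩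
  exact (Matrix.inv_eq_right_inv key).symm
end
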